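/- Let a, b, c, p, q, r be positive integers. Assume that c has no divisors of the form s^min(p,q) for any prime s, that b has no divisors of the form s^min(p,r) for any prime s, and that a has no divisors of the form s^min(q,r) for any prime s. Then an integer solution (x,y,z) of the equation a*x^p + b*y^q = c*z^r satisfies gcd(x,y,z) = 1 if and only if x, y, z are pairwise coprime. -/

import Mathlib

lemma aux0 (s : ℕ) (hs : s.Prime) (m : ℕ) (k w : ℤ) (n : ℕ)
    (hdvd : (s:ℤ)^m ∣ k * w^n) (hnd : ¬ (s:ℤ) ∣ w) : (s:ℤ)^m ∣ k := by
  have hps : Prime (s:ℤ) := Nat.prime_iff_prime_int.mp hs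
  have hcop : IsCoprime ((s:ℤ)^m) (w^n) := ((hps.coprime_iff_not_dvd).mpr hnd).pow
  exact hcop.dvd_of_dvd_mul_right hdvd

/-- If `c` has no divisors of the form `s^min(p,q)` for prime `s`, `b` has no divisors of the
form `s^min(p,r)` for prime `s`, and `a` has no divisors of the form `s^min(q,r)` for prime `s`,
then an integer solution `(x,y,z)` of `a*x^p + b*y^q = c*z^r` satisfies `gcd(x,y,z) = 1` if and
only if `x, y, z` are pairwise coprime. -/
theorem stmt0 (a b c p q r : ℕ) (ha : 0 < a) (hb : 0 < b) (hc : 0 < c)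
    (hp : 0 < p) (hq : 0 < q) (hr : 0 < r)
    (hcdiv : ∀ s : ℕ, s.Prime → ¬ s ^ (min p q) ∣ c)
    (hbdiv : ∀ s : ℕ, s.Prime → ¬ s ^ (min p r) ∣ b)
    (hadiv : ∀ s : ℕ, s.Prime → ¬ s ^ (min q r) ∣ a)
    (x y z : ℤ) (heq : (a : ℤ) * x ^ p + (b : ℤ) * y ^ q = (c : ℤ) * z ^ r) :
    Int.gcd (Int.gcd x y) z = 1 ↔ (IsCoprime x y ∧ IsCoprime y z ∧ IsCoprime x z) := by
  constructor
  · intro h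
    -- no prime divides all pairs
    have hno : ∀ s : ℕ, s.Prime → (s:ℤ) ∣ x → (s:ℤ) ∣ y → (s:ℤ) ∣ z → False := by
      intro s hs hsx hsy hsz
      have h1 : (s:ℤ) ∣ (Int.gcd x y : ℤ) := Int.dvd_coe_gcd hsx hsy
      have h2 : (s:ℤ) ∣ (Int.gcd (Int.gcd x y : ℤ) z : ℤ) := Int.dvd_coe_gcd h1 hsz
      rw [h] at h2
      have : s ∣ 1 := by exact_mod_cast h2
      exact hs.ne_one (Nat.dvd_one.mp this)
    refine ⟨?_, ?_, ?_⟩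
    · rw [Int.isCoprime_iff_gcd_eq_one]
      by_contra hne
      obtain ⟨s, hs, hsd⟩ := Nat.exists_prime_and_dvd hne
      have hsd' : (s:ℤ) ∣ (Int.gcd x y : ℤ) := Int.natCast_dvd_natCast.mpr hsd
      have hsx : (s:ℤ) ∣ x := hsd'.trans (Int.gcd_dvd_left _ _)
      have hsy : (s:ℤ) ∣ y := hsd'.trans (Int.gcd_dvd_right _ _)
      have hsz : ¬ (s:ℤ) ∣ z := fun hsz => hno s hs hsx hsy hsz
      have hd1 : (s:ℤ) ^ (min p q) ∣ (a:ℤ) * x ^ p :=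
        Dvd.dvd.mul_left ((pow_dvd_pow_of_dvd hsx _).trans (pow_dvd_pow x (min_le_left p q))) _
      have hd2 : (s:ℤ) ^ (min p q) ∣ (b:ℤ) * y ^ q :=
        Dvd.dvd.mul_left ((pow_dvd_pow_of_dvd hsy _).trans (pow_dvd_pow y (min_le_right p q))) _
      have hd3 : (s:ℤ) ^ (min p q) ∣ (c:ℤ) * z ^ r := heq ▸ dvd_add hd1 hd2
      have := aux0 s hs _ _ _ _ hd3 hsz
      exact hcdiv s hs (by exact_mod_cast this)
    · rw [Int.isCoprime_iff_gcd_eq_one]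
      by_contra hne
      obtain ⟨s, hs, hsd⟩ := Nat.exists_prime_and_dvd hne
      have hsd' : (s:ℤ) ∣ (Int.gcd y z : ℤ) := Int.natCast_dvd_natCast.mpr hsd
      have hsy : (s:ℤ) ∣ y := hsd'.trans (Int.gcd_dvd_left _ _)
      have hsz : (s:ℤ) ∣ z := hsd'.trans (Int.gcd_dvd_right _ _)
      have hsx : ¬ (s:ℤ) ∣ x := fun hsx => hno s hs hsx hsy hsz
      have hd1 : (s:ℤ) ^ (min q r) ∣ (b:ℤ) * y ^ q :=
        Dvd.dvd.mul_left ((pow_dvd_pow_of_dvd hsy _).trans (pow_dvd_pow y (min_le_left q r))) _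
      have hd2 : (s:ℤ) ^ (min q r) ∣ (c:ℤ) * z ^ r :=
        Dvd.dvd.mul_left ((pow_dvd_pow_of_dvd hsz _).trans (pow_dvd_pow z (min_le_right q r))) _
      have hd3 : (s:ℤ) ^ (min q r) ∣ (a:ℤ) * x ^ p := by
        have : (a:ℤ) * x ^ p = (c:ℤ) * z ^ r - (b:ℤ) * y ^ q := by linarith
        rw [this]; exact dvd_sub hd2 hd1
      have := aux0 s hs _ _ _ _ hd3 hsx
      exact hadiv s hs (by exact_mod_cast this)
    · rw [Int.isCoprime_iff_gcd_eq_one]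
      by_contra hne
      obtain ⟨s, hs, hsd⟩ := Nat.exists_prime_and_dvd hne
      have hsd' : (s:ℤ) ∣ (Int.gcd x z : ℤ) := Int.natCast_dvd_natCast.mpr hsd
      have hsx : (s:ℤ) ∣ x := hsd'.trans (Int.gcd_dvd_left _ _)
      have hsz : (s:ℤ) ∣ z := hsd'.trans (Int.gcd_dvd_right _ _)
      have hsy : ¬ (s:ℤ) ∣ y := fun hsy => hno s hs hsx hsy hsz
      have hd1 : (s:ℤ) ^ (min p r) ∣ (a:ℤ) * x ^ p :=
        Dvd.dvd.mul_left ((pow_dvd_pow_of_dvd hsx _).trans (pow_dvd_pow x (min_le_left p r))) _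
      have hd2 : (s:ℤ) ^ (min p r) ∣ (c:ℤ) * z ^ r :=
        Dvd.dvd.mul_left ((pow_dvd_pow_of_dvd hsz _).trans (pow_dvd_pow z (min_le_right p r))) _
      have hd3 : (s:ℤ) ^ (min p r) ∣ (b:ℤ) * y ^ q := by
        have : (b:ℤ) * y ^ q = (c:ℤ) * z ^ r - (a:ℤ) * x ^ p := by linarith
        rw [this]; exact dvd_sub hd2 hd1
      have := aux0 s hs _ _ _ _ hd3 hsy
      exact hbdiv s hs (by exact_mod_cast this)
  · rintro ⟨hxy, _, _⟩
    rw [Int.isCoprime_iff_gcd_eq_one] at hxy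
    rw [hxy]
    simp [Int.one_gcd]
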